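/- Let p ∈ (1,∞) and δ ≥ 0. There exist constants c, C > 0 depending only on p such that for all 3×3 real matrices P, Q one has c·|F(P) − F(Q)|² ≤ (S(P) − S(Q))·(P − Q) ≤ C·|F(P) − F(Q)|², and moreover c·φ(|Q^sym|) ≤ S(Q)·Q ≤ C·φ(|Q^sym|) and c·φ(|Q^sym|) ≤ |F(Q)|² ≤ C·φ(|Q^sym|). -/

import Mathlib

/-- 3×3 real matrices, represented as functions. -/
abbrev M3 : Type := Fin 3 → Fin 3 → ℝ

/-- Symmetric part `P^sym = (P + Pᵀ)/2`. -/
noncomputable def sym3 (P : M3) : M3 := fun i j => (P i j + P j i) / 2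

/-- Frobenius norm. -/
noncomputable def frob3 (P : M3) : ℝ := Real.sqrt (∑ i, ∑ j, (P i j) ^ 2)

/-- Frobenius inner product `A·B = ∑_{ij} A_{ij} B_{ij}`. -/
noncomputable def dotF (A B : M3) : ℝ := ∑ i, ∑ j, A i j * B i j

/-- The N-function `φ = φ_{p,δ}`, `φ(t) = ∫₀ᵗ (δ+s)^(p-2)·s ds`. -/
noncomputable def phiFun (p δ t : ℝ) : ℝ := ∫ s in (0:ℝ)..t, (δ + s) ^ (p - 2) * s

/-- The stress tensor `S(P) = (δ+|P^sym|)^{p−2} P^sym`. -/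
noncomputable def Smat (p δ : ℝ) (P : M3) : M3 :=
  fun i j => (δ + frob3 (sym3 P)) ^ (p - 2) * sym3 P i j

/-- `F(P) = (δ+|P^sym|)^{(p−2)/2} P^sym`. -/
noncomputable def Fmat (p δ : ℝ) (P : M3) : M3 :=
  fun i j => (δ + frob3 (sym3 P)) ^ ((p - 2) / 2) * sym3 P i j


section Aux
open Real


lemma rpow_diff_le (q u v : ℝ) (hq : 0 ≤ q) (hu : 0 ≤ u) (huv : u ≤ v) :
    v ^ q - u ^ q ≤ max 1 q * (v ^ (q - 1) * (v - u)) := by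
  rcases huv.eq_or_lt with rfl | hlt
  · simp
  have hv : 0 < v := lt_of_le_of_lt hu hlt
  rcases le_total q 1 with hq1 | hq1
  · have key : v ^ (q - 1) * u ≤ u ^ q := by
      rcases hu.eq_or_lt with rfl | hu'
      · simpa using Real.rpow_nonneg (le_refl 0) q
      · have h1 : v ^ (q - 1) ≤ u ^ (q - 1) :=
          Real.rpow_le_rpow_of_nonpos hu' huv (by linarith)
        calc v ^ (q - 1) * u ≤ u ^ (q - 1) * u := by nlinarith
          _ = u ^ ((q - 1) + 1) := (Real.rpow_add_one hu'.ne' _).symm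
          _ = u ^ q := by ring_nf
    have hvq : v ^ (q - 1) * v = v ^ q := by
      rw [← Real.rpow_add_one hv.ne']; ring_nf
    have : v ^ q - u ^ q ≤ v ^ (q - 1) * (v - u) := by nlinarith
    have hmax : (1:ℝ) ≤ max 1 q := le_max_left _ _
    nlinarith [mul_nonneg (Real.rpow_nonneg hv.le (q-1)) (sub_nonneg.2 huv)]
  · obtain ⟨ξ, hξ, hslope⟩ := exists_hasDerivAt_eq_slope (fun x => x ^ q)
      (fun x => q * x ^ (q - 1)) hlt
      (continuousOn_id.rpow_const fun x _ => Or.inr hq)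
      (fun x _ => Real.hasDerivAt_rpow_const (Or.inr hq1))
    have hξ0 : 0 ≤ ξ := le_trans hu hξ.1.le
    have hbound : q * ξ ^ (q - 1) ≤ q * v ^ (q - 1) := by
      have := Real.rpow_le_rpow hξ0 hξ.2.le (by linarith : (0:ℝ) ≤ q - 1)
      nlinarith
    have hmax : q ≤ max 1 q := le_max_right _ _
    have hvu : 0 < v - u := by linarith
    have : v ^ q - u ^ q = q * ξ ^ (q - 1) * (v - u) := by
      rw [eq_div_iff hvu.ne'] at hslope; linarith
    nlinarith [mul_nonneg (Real.rpow_nonneg (le_trans hu huv) (q-1)) hvu.le]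

lemma gdiff_lower (q δ a b : ℝ) (hq : -1 < q) (hδ : 0 ≤ δ) (hB : 0 < δ + b) (hb : 0 ≤ b)
    (hba : b ≤ a) :
    min 1 (1 + q) * ((δ + a) ^ q * (a - b)) ≤ (δ + a) ^ q * a - (δ + b) ^ q * b := by
  have hA : 0 < δ + a := lt_of_lt_of_le hB (by linarith)
  rcases le_or_gt 0 q with hq0 | hq0
  · have hmin : min 1 (1 + q) = 1 := min_eq_left (by linarith)
    rw [hmin, one_mul]
    have h1 : (δ + b) ^ q ≤ (δ + a) ^ q := Real.rpow_le_rpow hB.le (by linarith) hq0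
    nlinarith [Real.rpow_nonneg hA.le q]
  · have hmin : min 1 (1 + q) = 1 + q := min_eq_right (by linarith)
    rw [hmin]
    rcases hba.eq_or_lt with rfl | hlt
    · simp
    obtain ⟨ξ, hξ, hslope⟩ := exists_hasDerivAt_eq_slope (fun t => (δ + t) ^ q * t)
      (fun t => (1 * q * (δ + t) ^ (q - 1)) * t + (δ + t) ^ q * 1) hlt
      (((continuousOn_const.add continuousOn_id).rpow_const
          (fun x hx => Or.inl (by have := hx.1; show δ + x ≠ 0; exact ne_of_gt (by linarith)))).mul continuousOn_id)
      (fun x hx => by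
        have hx0 : 0 < δ + x := by have := hx.1; linarith
        exact (((hasDerivAt_id x).const_add δ).rpow_const (Or.inl hx0.ne')).mul (hasDerivAt_id x))
    have hξB : 0 < δ + ξ := by linarith [hξ.1]
    have hξa : ξ ≤ a := hξ.2.le
    have e1 : (δ + ξ) ^ (q - 1) * (δ + ξ) = (δ + ξ) ^ q := by
      rw [← Real.rpow_add_one hξB.ne']; ring_nf
    have hξnn : 0 ≤ ξ := le_trans hb hξ.1.le
    have hnn1 : 0 ≤ (δ + ξ) ^ (q - 1) := Real.rpow_nonneg hξB.le _
    have h2 : q * ((δ + ξ) ^ (q - 1) * ξ) ≥ q * (δ + ξ) ^ q := by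
      rw [← e1]
      have hstep : (δ + ξ) ^ (q - 1) * ξ ≤ (δ + ξ) ^ (q - 1) * (δ + ξ) :=
        mul_le_mul_of_nonneg_left (by linarith) hnn1
      nlinarith
    have h3 : (δ + a) ^ q ≤ (δ + ξ) ^ q :=
      Real.rpow_le_rpow_of_nonpos hξB (by linarith) hq0.le
    have hderiv_ge : (1 + q) * (δ + a) ^ q ≤ (1 * q * (δ + ξ) ^ (q - 1)) * ξ + (δ + ξ) ^ q * 1 := by
      nlinarith
    have hab0 : (0:ℝ) < a - b := by linarith
    have heq : (δ + a) ^ q * a - (δ + b) ^ q * b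
        = ((1 * q * (δ + ξ) ^ (q - 1)) * ξ + (δ + ξ) ^ q * 1) * (a - b) := by
      rw [eq_div_iff hab0.ne'] at hslope; linarith
    rw [heq]
    have := mul_le_mul_of_nonneg_right hderiv_ge hab0.le
    nlinarith [this]

lemma gdiff_upper (q δ a b : ℝ) (hq : -1 < q) (hδ : 0 ≤ δ) (hB : 0 < δ + b) (hb : 0 ≤ b)
    (hba : b ≤ a) :
    (δ + a) ^ q * a - (δ + b) ^ q * b ≤ (1 + max 1 q) * ((δ + a) ^ q * (a - b)) := by
  have hA : 0 < δ + a := lt_of_lt_of_le hB (by linarith)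
  have hmax : (1:ℝ) ≤ max 1 q := le_max_left _ _
  have hαnn : 0 ≤ (δ + a) ^ q := Real.rpow_nonneg hA.le q
  rcases le_or_gt q 0 with hq0 | hq0
  · have h1 : (δ + a) ^ q ≤ (δ + b) ^ q := Real.rpow_le_rpow_of_nonpos hB (by linarith) hq0
    nlinarith [mul_nonneg hαnn (sub_nonneg.2 hba)]
  · have hd := rpow_diff_le q (δ + b) (δ + a) hq0.le hB.le (by linarith)
    have e1 : (δ + a) ^ (q - 1) * (δ + a) = (δ + a) ^ q := by
      rw [← Real.rpow_add_one hA.ne']; ring_nf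
    have h2 : ((δ + a) ^ q - (δ + b) ^ q) * b ≤ max 1 q * ((δ + a) ^ q * (a - b)) := by
      have hnn : 0 ≤ (δ + a) ^ q - (δ + b) ^ q := by
        have := Real.rpow_le_rpow hB.le (by linarith : δ + b ≤ δ + a) hq0.le
        linarith
      have h3 : ((δ + a) ^ q - (δ + b) ^ q) * b ≤ ((δ + a) ^ q - (δ + b) ^ q) * (δ + a) :=
        mul_le_mul_of_nonneg_left (by linarith) hnn
      have h4 := mul_le_mul_of_nonneg_right hd hA.le
      have e2 : (max 1 q * ((δ + a) ^ (q - 1) * ((δ + a) - (δ + b)))) * (δ + a)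
          = max 1 q * ((δ + a) ^ q * (a - b)) := by rw [← e1]; ring
      calc ((δ + a) ^ q - (δ + b) ^ q) * b
          ≤ ((δ + a) ^ q - (δ + b) ^ q) * (δ + a) := h3
        _ ≤ (max 1 q * ((δ + a) ^ (q - 1) * ((δ + a) - (δ + b)))) * (δ + a) := h4
        _ = max 1 q * ((δ + a) ^ q * (a - b)) := e2
    nlinarith [mul_nonneg hαnn (sub_nonneg.2 hba)]

lemma g_mono (q δ a b : ℝ) (hq : -1 < q) (hδ : 0 ≤ δ) (hb : 0 ≤ b) (hba : b ≤ a) :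
    (δ + b) ^ q * b ≤ (δ + a) ^ q * a := by
  rcases (by positivity : (0:ℝ) ≤ δ + b).eq_or_lt with h0 | h0
  · have hb0 : b = 0 := by linarith
    subst hb0
    simp only [mul_zero]
    positivity
  · have h := gdiff_lower q δ a b hq hδ h0 hb hba
    have hA : (0:ℝ) < δ + a := lt_of_lt_of_le h0 (by linarith)
    have h1 : 0 < min 1 (1 + q) := lt_min one_pos (by linarith)
    have h2 : 0 ≤ min 1 (1 + q) * ((δ + a) ^ q * (a - b)) := by
      apply mul_nonneg h1.le
      exact mul_nonneg (Real.rpow_nonneg hA.le q) (by linarith)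
    linarith

section endpoints
variable {c C α β γ η a b : ℝ}

lemma endW_lo_neg (hc : c ≤ 1/2) (hα : 0 ≤ α) (hβ : 0 ≤ β) (hb : 0 ≤ b) (hba : b ≤ a) :
    0 ≤ (2*c*α - (α+β)) * (-(a*b)) + (α*a^2 + β*b^2 - c*α*(a^2+b^2)) := by
  nlinarith [mul_nonneg hα (sq_nonneg (a+b)),
    mul_nonneg (mul_nonneg hα (by linarith : (0:ℝ) ≤ a+b)) (by linarith : (0:ℝ) ≤ a-b),
    mul_nonneg (mul_nonneg hβ hb) (by linarith : (0:ℝ) ≤ a+b)]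

lemma endW_lo_pos (h1 : c * (α*(a-b)) ≤ α*a - β*b) (hba : b ≤ a) :
    0 ≤ (2*c*α - (α+β)) * (a*b) + (α*a^2 + β*b^2 - c*α*(a^2+b^2)) := by
  nlinarith [mul_le_mul_of_nonneg_left h1 (sub_nonneg.2 hba)]

lemma endW_hi_neg (hC : 2 ≤ C) (hα : 0 ≤ α) (hb : 0 ≤ b) (hba : b ≤ a) (gm : β*b ≤ α*a) :
    0 ≤ ((α+β) - 2*C*α) * (-(a*b)) + (C*α*(a^2+b^2) - (α*a^2 + β*b^2)) := by
  nlinarith [mul_nonneg (mul_nonneg (by linarith : (0:ℝ) ≤ C - 2) hα) (sq_nonneg (a+b)),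
    mul_le_mul_of_nonneg_right gm (by linarith : (0:ℝ) ≤ a+b),
    mul_nonneg (mul_nonneg hα (by linarith : (0:ℝ) ≤ a+b)) hb]

lemma endW_hi_pos (h1 : α*a - β*b ≤ C*(α*(a-b))) (hba : b ≤ a) :
    0 ≤ ((α+β) - 2*C*α) * (a*b) + (C*α*(a^2+b^2) - (α*a^2 + β*b^2)) := by
  nlinarith [mul_le_mul_of_nonneg_left h1 (sub_nonneg.2 hba)]

lemma endU_lo_neg (hc : c ≤ 1/4) (hγ : 0 ≤ γ) (hη : 0 ≤ η) (hb : 0 ≤ b) (hba : b ≤ a) :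
    0 ≤ (2*c*(γ*γ) - 2*(γ*η)) * (-(a*b)) + ((γ*γ)*a^2 + (η*η)*b^2 - c*(γ*γ)*(a^2+b^2)) := by
  have ha : 0 ≤ a := le_trans hb hba
  nlinarith [mul_nonneg (mul_nonneg (mul_nonneg hγ hγ) (by linarith : (0:ℝ) ≤ 3*a+b))
      (by linarith : (0:ℝ) ≤ a-b),
    mul_nonneg (mul_nonneg (mul_nonneg hγ ha) hη) hb, sq_nonneg (η*b),
    mul_nonneg (mul_nonneg hγ hγ) (sq_nonneg (a+b))]

lemma endU_lo_pos {ch : ℝ} (h3 : (ch*(γ*(a-b)))^2 ≤ (γ*a - η*b)^2) (hc : c ≤ ch^2) :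
    0 ≤ (2*c*(γ*γ) - 2*(γ*η)) * (a*b) + ((γ*γ)*a^2 + (η*η)*b^2 - c*(γ*γ)*(a^2+b^2)) := by
  nlinarith [h3, mul_nonneg (by linarith : (0:ℝ) ≤ ch^2 - c) (sq_nonneg (γ*(a-b)))]

lemma endU_hi_neg (hC : 4 ≤ C) (hγ : 0 ≤ γ) (hη : 0 ≤ η) (hb : 0 ≤ b) (hba : b ≤ a)
    (gmh : η*b ≤ γ*a) :
    0 ≤ (2*(γ*η) - 2*C*(γ*γ)) * (-(a*b)) + (C*(γ*γ)*(a^2+b^2) - ((γ*γ)*a^2 + (η*η)*b^2)) := by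
  have ha : 0 ≤ a := le_trans hb hba
  have h3 : (γ*a + η*b)^2 ≤ (2*(γ*a))^2 := by
    nlinarith [gmh, mul_nonneg hγ ha, mul_nonneg hη hb]
  nlinarith [h3, mul_nonneg (mul_nonneg (by linarith : (0:ℝ) ≤ C - 4) (mul_nonneg hγ hγ))
      (sq_nonneg (a+b)),
    mul_nonneg (mul_nonneg (mul_nonneg hγ hγ) ha) hb,
    mul_nonneg (mul_nonneg hγ hγ) (sq_nonneg b)]

lemma endU_hi_pos {Ch : ℝ} (h3 : (γ*a - η*b)^2 ≤ (Ch*(γ*(a-b)))^2) (hC : Ch^2 ≤ C) :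
    0 ≤ (2*(γ*η) - 2*C*(γ*γ)) * (a*b) + (C*(γ*γ)*(a^2+b^2) - ((γ*γ)*a^2 + (η*η)*b^2)) := by
  nlinarith [h3, mul_nonneg (by linarith : (0:ℝ) ≤ C - Ch^2) (sq_nonneg (γ*(a-b)))]

lemma scale_lo_aux (c c' X Y : ℝ) (h0 : c ≤ c') (h2 : 0 ≤ X) (h : c' * X ≤ Y) : c * X ≤ Y :=
  le_trans (mul_le_mul_of_nonneg_right h0 h2) h

lemma scale_hi_aux (c' C X Y : ℝ) (h0 : c' ≤ C) (h2 : 0 ≤ X) (h : Y ≤ c' * X) : Y ≤ C * X :=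
  le_trans h (mul_le_mul_of_nonneg_right h0 h2)

lemma sq_mono_aux (x y : ℝ) (h : x ≤ y) (hx : 0 ≤ x) : x^2 ≤ y^2 := by nlinarith

end endpoints


lemma affine_nonneg (m k lo hi r : ℝ) (h1 : lo ≤ r) (h2 : r ≤ hi)
    (hlo : 0 ≤ m * lo + k) (hhi : 0 ≤ m * hi + k) : 0 ≤ m * r + k := by
  rcases le_total 0 m with h | h
  · nlinarith
  · nlinarith

lemma sq_rpow_half (x e : ℝ) (hx : 0 ≤ x) : (x ^ (e / 2)) ^ 2 = x ^ e := by
  rcases hx.eq_or_lt with rfl | hx'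
  · by_cases he : e = 0
    · simp [he]
    · rw [Real.zero_rpow (by intro h; exact he (by linarith [h] : e = 0)), Real.zero_rpow he]
      · norm_num
  · rw [sq, ← Real.rpow_add hx']
    congr 1; ring

/-- Main scalar hammer lemma, ordered case `b ≤ a`. -/
lemma scalar_core (p : ℝ) (hp : 1 < p) :
    ∃ c C : ℝ, 0 < c ∧ 0 < C ∧ ∀ δ a b r : ℝ, 0 ≤ δ → 0 ≤ b → b ≤ a → |r| ≤ a * b →
      c * ((δ+a)^(p-2) * a^2 + (δ+b)^(p-2) * b^2 - 2*((δ+a)^((p-2)/2)*(δ+b)^((p-2)/2))*r)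
        ≤ (δ+a)^(p-2) * a^2 + (δ+b)^(p-2) * b^2 - ((δ+a)^(p-2) + (δ+b)^(p-2))*r
      ∧ (δ+a)^(p-2) * a^2 + (δ+b)^(p-2) * b^2 - ((δ+a)^(p-2) + (δ+b)^(p-2))*r
        ≤ C * ((δ+a)^(p-2) * a^2 + (δ+b)^(p-2) * b^2 - 2*((δ+a)^((p-2)/2)*(δ+b)^((p-2)/2))*r) := by
  set q : ℝ := p - 2 with hqdef
  set q2 : ℝ := (p - 2) / 2 with hq2def
  have hq : -1 < q := by simp only [hqdef]; linarith
  have hq2 : -1 < q2 := by simp only [hq2def]; linarith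
  set cq : ℝ := min 1 (1 + q) with hcq
  set Cq : ℝ := 1 + max 1 q with hCq
  set ch : ℝ := min 1 (1 + q2) with hch
  set Ch : ℝ := 1 + max 1 q2 with hCh
  have hcq0 : 0 < cq := lt_min one_pos (by linarith)
  have hCq0 : (0:ℝ) < Cq := by have := le_max_left (1:ℝ) q; simp only [hCq]; linarith
  have hch0 : 0 < ch := lt_min one_pos (by linarith)
  have hCh0 : (0:ℝ) < Ch := by have := le_max_left (1:ℝ) q2; simp only [hCh]; linarith
  set cW : ℝ := min cq (1/2) with hcW
  set CW : ℝ := max Cq 2 with hCW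
  set cU : ℝ := min (ch^2) (1/4) with hcU
  set CU : ℝ := max (Ch^2) 4 with hCU
  have hcW0 : 0 < cW := lt_min hcq0 (by norm_num)
  have hCW0 : (0:ℝ) < CW := lt_of_lt_of_le hCq0 (le_max_left _ _)
  have hcU0 : 0 < cU := lt_min (by positivity) (by norm_num)
  have hCU0 : (0:ℝ) < CU := lt_of_lt_of_le (by positivity) (le_max_left _ _)
  refine ⟨cW / CU, CW / cU, by positivity, by positivity, ?_⟩
  intro δ a b r hδ hb hba hr
  have ha : 0 ≤ a := le_trans hb hba
  set α : ℝ := (δ+a)^q with hα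
  set β : ℝ := (δ+b)^q with hβ
  set γ : ℝ := (δ+a)^q2 with hγ
  set η : ℝ := (δ+b)^q2 with hη
  have hrlo : -(a*b) ≤ r := neg_le_of_abs_le hr
  have hrhi : r ≤ a*b := le_of_abs_le hr
  have hA0 : 0 ≤ δ + a := by linarith
  have hB0 : 0 ≤ δ + b := by linarith
  have hαnn : 0 ≤ α := Real.rpow_nonneg hA0 q
  have hβnn : 0 ≤ β := Real.rpow_nonneg hB0 q
  have hγnn : 0 ≤ γ := Real.rpow_nonneg hA0 q2
  have hηnn : 0 ≤ η := Real.rpow_nonneg hB0 q2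
  rcases hB0.eq_or_lt with hBz | hB
  · -- degenerate case : δ + b = 0, so b = 0 and r = 0
    have hb0 : b = 0 := by linarith
    have hr0 : r = 0 := by
      have h' : |r| ≤ 0 := by rw [hb0] at hr; simpa using hr
      exact abs_nonpos_iff.mp h'
    subst hb0; rw [hr0]
    have hX : 0 ≤ α * a^2 := by positivity
    have hcle : cW / CU ≤ 1 := by
      rw [div_le_one hCU0]
      calc cW ≤ 1/2 := min_le_right _ _
        _ ≤ 4 := by norm_num
        _ ≤ CU := le_max_right _ _
    have hCge : (1:ℝ) ≤ CW / cU := by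
      rw [le_div_iff₀ hcU0]
      calc 1 * cU = cU := one_mul _
        _ ≤ 1/4 := min_le_right _ _
        _ ≤ 2 := by norm_num
        _ ≤ CW := le_max_right _ _
    constructor
    · calc cW/CU * (α*a^2 + β*0^2 - 2*(γ*η)*0) = cW/CU * (α*a^2) := by ring
        _ ≤ 1 * (α*a^2) := mul_le_mul_of_nonneg_right hcle hX
        _ = α*a^2 + β*0^2 - (α+β)*0 := by ring
    · calc α*a^2 + β*0^2 - (α+β)*0 = 1 * (α*a^2) := by ring
        _ ≤ CW/cU * (α*a^2) := mul_le_mul_of_nonneg_right hCge hX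
        _ = CW/cU * (α*a^2 + β*0^2 - 2*(γ*η)*0) := by ring
  · -- main case : 0 < δ + b ≤ δ + a
    have hA : 0 < δ + a := lt_of_lt_of_le hB (by linarith)
    have hγγ : γ * γ = α := by
      rw [hγ, hα, ← Real.rpow_add hA]; congr 1; rw [hq2def, hqdef]; ring
    have hηη : η * η = β := by
      rw [hη, hβ, ← Real.rpow_add hB]; congr 1; rw [hq2def, hqdef]; ring
    have E1 : cq * (α * (a-b)) ≤ α * a - β * b := gdiff_lower q δ a b hq hδ hB hb hba
    have E2 : α * a - β * b ≤ Cq * (α * (a-b)) := gdiff_upper q δ a b hq hδ hB hb hba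
    have E3 : ch * (γ * (a-b)) ≤ γ * a - η * b := gdiff_lower q2 δ a b hq2 hδ hB hb hba
    have E4 : γ * a - η * b ≤ Ch * (γ * (a-b)) := gdiff_upper q2 δ a b hq2 hδ hB hb hba
    have gm : β * b ≤ α * a := g_mono q δ a b hq hδ hb hba
    have gmh : η * b ≤ γ * a := g_mono q2 δ a b hq2 hδ hb hba
    have hab : 0 ≤ a - b := by linarith
    have h3lo : (ch*(γ*(a-b)))^2 ≤ (γ*a - η*b)^2 :=
      sq_mono_aux _ _ E3 (mul_nonneg hch0.le (mul_nonneg hγnn hab))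
    have h3hi : (γ*a - η*b)^2 ≤ (Ch*(γ*(a-b)))^2 :=
      sq_mono_aux _ _ E4 (by linarith [gmh])
    have GA : 0 ≤ (2*cW*α - (α+β)) * r + (α*a^2 + β*b^2 - cW*α*(a^2+b^2)) := by
      apply affine_nonneg _ _ (-(a*b)) (a*b) r hrlo hrhi
      · exact endW_lo_neg (min_le_right _ _) hαnn hβnn hb hba
      · exact endW_lo_pos (scale_lo_aux _ _ _ _ (min_le_left _ _) (mul_nonneg hαnn hab) E1) hba
    have GB : 0 ≤ ((α+β) - 2*CW*α) * r + (CW*α*(a^2+b^2) - (α*a^2 + β*b^2)) := by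
      apply affine_nonneg _ _ (-(a*b)) (a*b) r hrlo hrhi
      · exact endW_hi_neg (le_max_right _ _) hαnn hb hba gm
      · exact endW_hi_pos (scale_hi_aux _ _ _ _ (le_max_left _ _) (mul_nonneg hαnn hab) E2) hba
    have GC : 0 ≤ (2*cU*(γ*γ) - 2*(γ*η)) * r + ((γ*γ)*a^2 + (η*η)*b^2 - cU*(γ*γ)*(a^2+b^2)) := by
      apply affine_nonneg _ _ (-(a*b)) (a*b) r hrlo hrhi
      · exact endU_lo_neg (min_le_right _ _) hγnn hηnn hb hba
      · exact endU_lo_pos h3lo (min_le_left _ _)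
    have GD : 0 ≤ (2*(γ*η) - 2*CU*(γ*γ)) * r + (CU*(γ*γ)*(a^2+b^2) - ((γ*γ)*a^2 + (η*η)*b^2)) := by
      apply affine_nonneg _ _ (-(a*b)) (a*b) r hrlo hrhi
      · exact endU_hi_neg (le_max_right _ _) hγnn hηnn hb hba gmh
      · exact endU_hi_pos h3hi (le_max_left _ _)
    -- rewrite γγ = α, ηη = β in GC, GD
    rw [hγγ, hηη] at GC GD
    have hUhi : α*a^2 + β*b^2 - 2*(γ*η)*r ≤ CU*(α*(a^2+b^2-2*r)) := by linarith
    have hUlo : cU*(α*(a^2+b^2-2*r)) ≤ α*a^2 + β*b^2 - 2*(γ*η)*r := by linarith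
    have hWlo : cW*(α*(a^2+b^2-2*r)) ≤ α*a^2 + β*b^2 - (α+β)*r := by linarith
    have hWhi : α*a^2 + β*b^2 - (α+β)*r ≤ CW*(α*(a^2+b^2-2*r)) := by linarith
    constructor
    · have step : (cW/CU) * (α*a^2 + β*b^2 - 2*(γ*η)*r) ≤ cW*(α*(a^2+b^2-2*r)) := by
        rw [div_mul_eq_mul_div, div_le_iff₀ hCU0]
        calc cW * (α*a^2 + β*b^2 - 2*(γ*η)*r) ≤ cW * (CU*(α*(a^2+b^2-2*r))) :=
              mul_le_mul_of_nonneg_left hUhi hcW0.le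
          _ = cW*(α*(a^2+b^2-2*r)) * CU := by ring
      linarith
    · have step : CW*(α*(a^2+b^2-2*r)) ≤ (CW/cU) * (α*a^2 + β*b^2 - 2*(γ*η)*r) := by
        rw [div_mul_eq_mul_div, le_div_iff₀ hcU0]
        calc CW*(α*(a^2+b^2-2*r)) * cU = CW * (cU*(α*(a^2+b^2-2*r))) := by ring
          _ ≤ CW * (α*a^2 + β*b^2 - 2*(γ*η)*r) := mul_le_mul_of_nonneg_left hUlo hCW0.le
      linarith


lemma integrand_contOn (p δ : ℝ) (hp : 1 < p) (hδ : 0 ≤ δ) (lo hi : ℝ) (hlo : 0 ≤ lo) :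
    ContinuousOn (fun s : ℝ => (δ + s) ^ (p - 2) * s) (Set.Icc lo hi) := by
  rcases hδ.eq_or_lt with rfl | hδ'
  · -- δ = 0
    refine ContinuousOn.congr (f := fun s : ℝ => s ^ (p - 1)) ?_ ?_
    · exact continuousOn_id.rpow_const fun x _ => Or.inr (by linarith)
    · intro s hs
      have hs0 : 0 ≤ s := le_trans hlo hs.1
      rcases hs0.eq_or_lt with rfl | hs'
      · simp [Real.zero_rpow (by intro h; linarith [h] : p - 1 ≠ 0)]
      · show (0 + s) ^ (p-2) * s = s ^ (p - 1)
        rw [zero_add, show p - 1 = (p-2) + 1 by ring, Real.rpow_add_one hs'.ne']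
  · exact ((continuousOn_const.add continuousOn_id).rpow_const
      (fun x hx => Or.inl (by have := le_trans hlo hx.1; show δ + x ≠ 0; exact ne_of_gt (by linarith)))).mul
      continuousOn_id

lemma phi_comp (p : ℝ) (hp : 1 < p) (δ t : ℝ) (hδ : 0 ≤ δ) (ht : 0 ≤ t) :
    min 1 ((2:ℝ)^(2-p)) / 4 * ((δ+t)^(p-2) * t^2) ≤ phiFun p δ t
      ∧ phiFun p δ t ≤ (δ+t)^(p-2) * t^2 := by
  have hq : -1 < p - 2 := by linarith
  rcases ht.eq_or_lt with rfl | ht'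
  · simp [phiFun]
  have hInt : IntervalIntegrable (fun s : ℝ => (δ + s) ^ (p - 2) * s) MeasureTheory.volume 0 t := by
    apply ContinuousOn.intervalIntegrable
    rw [Set.uIcc_of_le ht]
    exact integrand_contOn p δ hp hδ 0 t le_rfl
  have hInt1 : IntervalIntegrable (fun s : ℝ => (δ + s) ^ (p - 2) * s) MeasureTheory.volume 0 (t/2) := by
    apply ContinuousOn.intervalIntegrable
    rw [Set.uIcc_of_le (by linarith)]
    exact integrand_contOn p δ hp hδ 0 (t/2) le_rfl
  have hInt2 : IntervalIntegrable (fun s : ℝ => (δ + s) ^ (p - 2) * s) MeasureTheory.volume (t/2) t := by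
    apply ContinuousOn.intervalIntegrable
    rw [Set.uIcc_of_le (by linarith)]
    exact integrand_contOn p δ hp hδ (t/2) t (by linarith)
  constructor
  · -- lower bound
    have hsplit : phiFun p δ t
        = (∫ s in (0:ℝ)..(t/2), (δ + s) ^ (p - 2) * s)
          + ∫ s in (t/2:ℝ)..t, (δ + s) ^ (p - 2) * s := by
      rw [phiFun, ← intervalIntegral.integral_add_adjacent_intervals hInt1 hInt2]
    have h1 : 0 ≤ ∫ s in (0:ℝ)..(t/2), (δ + s) ^ (p - 2) * s := by
      apply intervalIntegral.integral_nonneg (by linarith)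
      intro x hx
      have : 0 ≤ δ + x := by have := hx.1; linarith
      have := hx.1
      positivity
    set K : ℝ := min 1 ((2:ℝ)^(2-p)) * ((δ+t)^(p-2)) * (t/2) with hK
    have h2 : ∀ x ∈ Set.Icc (t/2) t, K ≤ (δ + x) ^ (p - 2) * x := by
      intro x hx
      have hx1 := hx.1
      have hx2 := hx.2
      have hmono : (δ + t/2) ^ (p-2) * (t/2) ≤ (δ + x) ^ (p - 2) * x :=
        g_mono (p-2) δ x (t/2) hq hδ (by linarith) hx1
      refine le_trans ?_ hmono
      have ht2 : (0:ℝ) < δ + t/2 := by linarith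
      rcases le_or_gt p 2 with hp2 | hp2
      · -- p ≤ 2 : antitone
        have : (δ + t) ^ (p-2) ≤ (δ + t/2) ^ (p-2) :=
          Real.rpow_le_rpow_of_nonpos ht2 (by linarith) (by linarith)
        have hmin : min 1 ((2:ℝ)^(2-p)) ≤ 1 := min_le_left _ _
        have hnn : (0:ℝ) ≤ (δ+t)^(p-2) := Real.rpow_nonneg (by linarith) _
        have e1 : min 1 ((2:ℝ)^(2-p)) * (δ+t)^(p-2) ≤ (δ + t/2)^(p-2) :=
          le_trans (le_trans (mul_le_mul_of_nonneg_right hmin hnn) (one_mul _).le) this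
        calc K = (min 1 ((2:ℝ)^(2-p)) * (δ+t)^(p-2)) * (t/2) := hK
          _ ≤ (δ + t/2)^(p-2) * (t/2) := mul_le_mul_of_nonneg_right e1 (by linarith)
      · -- p > 2
        have hdd : ((δ + t)/2) ^ (p-2) ≤ (δ + t/2) ^ (p-2) :=
          Real.rpow_le_rpow (by linarith) (by linarith) (by linarith)
        have hdiv : ((δ + t)/2) ^ (p-2) = (δ+t)^(p-2) * (2:ℝ)^(2-p) := by
          rw [Real.div_rpow (by linarith) (by norm_num)]
          rw [show (2:ℝ)^(2-p) = ((2:ℝ)^(p-2))⁻¹ by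
            rw [← Real.rpow_neg (by norm_num)]; congr 1; ring]
          ring
        have hmin : min 1 ((2:ℝ)^(2-p)) ≤ (2:ℝ)^(2-p) := min_le_right _ _
        have hnn : (0:ℝ) ≤ (δ+t)^(p-2) := Real.rpow_nonneg (by linarith) _
        have e1 : min 1 ((2:ℝ)^(2-p)) * (δ+t)^(p-2) ≤ (δ + t/2)^(p-2) := by
          calc min 1 ((2:ℝ)^(2-p)) * (δ+t)^(p-2) ≤ (2:ℝ)^(2-p) * (δ+t)^(p-2) :=
                mul_le_mul_of_nonneg_right hmin hnn
            _ = ((δ + t)/2) ^ (p-2) := by rw [hdiv]; ring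
            _ ≤ (δ + t/2)^(p-2) := hdd
        calc K = (min 1 ((2:ℝ)^(2-p)) * (δ+t)^(p-2)) * (t/2) := hK
          _ ≤ (δ + t/2)^(p-2) * (t/2) := mul_le_mul_of_nonneg_right e1 (by linarith)
    have h3 : K * (t - t/2) ≤ ∫ s in (t/2:ℝ)..t, (δ + s) ^ (p - 2) * s := by
      have h0 := intervalIntegral.integral_mono_on (by linarith : t/2 ≤ t)
        (intervalIntegrable_const (c := K)) hInt2 h2
      rw [intervalIntegral.integral_const, smul_eq_mul] at h0
      linarith
    rw [hsplit]
    have hKt : K * (t - t/2) = min 1 ((2:ℝ)^(2-p)) * ((δ+t)^(p-2)) * (t^2/4) := by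
      rw [hK]; ring
    calc min 1 ((2:ℝ)^(2-p)) / 4 * ((δ+t)^(p-2) * t^2)
        = K * (t - t/2) := by rw [hKt]; ring
      _ ≤ ∫ s in (t/2:ℝ)..t, (δ + s) ^ (p - 2) * s := h3
      _ ≤ _ := by linarith
  · -- upper bound
    have h2 : ∀ x ∈ Set.Icc (0:ℝ) t, (δ + x) ^ (p - 2) * x ≤ (δ+t)^(p-2) * t := by
      intro x hx
      exact g_mono (p-2) δ t x hq hδ hx.1 hx.2
    have := intervalIntegral.integral_mono_on ht hInt
      (intervalIntegrable_const (c := (δ+t)^(p-2) * t)) h2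
    rw [intervalIntegral.integral_const, smul_eq_mul] at this
    calc phiFun p δ t ≤ (t - 0) * ((δ+t)^(p-2) * t) := this
      _ = (δ+t)^(p-2) * t^2 := by ring


lemma frob3_nonneg (A : M3) : 0 ≤ frob3 A := Real.sqrt_nonneg _

lemma frob3_sq (A : M3) : frob3 A ^ 2 = ∑ i, ∑ j, (A i j) ^ 2 :=
  Real.sq_sqrt (by positivity)

lemma dotF_self (A : M3) : dotF A A = frob3 A ^ 2 := by
  rw [frob3_sq, dotF]
  congr 1; funext i; congr 1; funext j; ring

lemma abs_dotF_le (A B : M3) : |dotF A B| ≤ frob3 A * frob3 B := by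
  have h : (dotF A B) ^ 2 ≤ (∑ i, ∑ j, (A i j)^2) * (∑ i, ∑ j, (B i j)^2) := by
    have key := Finset.sum_mul_sq_le_sq_mul_sq Finset.univ
      (fun ij : Fin 3 × Fin 3 => A ij.1 ij.2) (fun ij : Fin 3 × Fin 3 => B ij.1 ij.2)
    rw [Fintype.sum_prod_type, Fintype.sum_prod_type, Fintype.sum_prod_type] at key
    exact key
  have h2 : (dotF A B) ^ 2 ≤ (frob3 A * frob3 B) ^ 2 := by
    rw [mul_pow, frob3_sq, frob3_sq]; exact h
  have h3 : 0 ≤ frob3 A * frob3 B := mul_nonneg (frob3_nonneg A) (frob3_nonneg B)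
  calc |dotF A B| = Real.sqrt ((dotF A B) ^ 2) := (Real.sqrt_sq_eq_abs _).symm
    _ ≤ Real.sqrt ((frob3 A * frob3 B) ^ 2) := Real.sqrt_le_sqrt h2
    _ = frob3 A * frob3 B := Real.sqrt_sq h3

lemma expandW (p δ : ℝ) (P Q : M3) :
    dotF (Smat p δ P - Smat p δ Q) (P - Q)
      = (δ + frob3 (sym3 P)) ^ (p-2) * frob3 (sym3 P) ^ 2
        + (δ + frob3 (sym3 Q)) ^ (p-2) * frob3 (sym3 Q) ^ 2
        - ((δ + frob3 (sym3 P)) ^ (p-2) + (δ + frob3 (sym3 Q)) ^ (p-2))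
            * dotF (sym3 P) (sym3 Q) := by
  rw [← dotF_self, ← dotF_self]
  simp only [dotF, Smat, sym3, Pi.sub_apply, Fin.sum_univ_three]
  ring

lemma expandU (p δ : ℝ) (P Q : M3) :
    frob3 (Fmat p δ P - Fmat p δ Q) ^ 2
      = ((δ + frob3 (sym3 P)) ^ ((p-2)/2))^2 * frob3 (sym3 P) ^ 2
        + ((δ + frob3 (sym3 Q)) ^ ((p-2)/2))^2 * frob3 (sym3 Q) ^ 2
        - 2 * ((δ + frob3 (sym3 P)) ^ ((p-2)/2) * (δ + frob3 (sym3 Q)) ^ ((p-2)/2))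
            * dotF (sym3 P) (sym3 Q) := by
  rw [← dotF_self, ← dotF_self, ← dotF_self]
  simp only [dotF, Fmat, sym3, Pi.sub_apply, Fin.sum_univ_three]
  ring

lemma expandSQ (p δ : ℝ) (Q : M3) :
    dotF (Smat p δ Q) Q = (δ + frob3 (sym3 Q)) ^ (p-2) * frob3 (sym3 Q) ^ 2 := by
  rw [← dotF_self]
  simp only [dotF, Smat, sym3, Fin.sum_univ_three]
  ring

lemma expandFQ (p δ : ℝ) (Q : M3) :
    frob3 (Fmat p δ Q) ^ 2
      = ((δ + frob3 (sym3 Q)) ^ ((p-2)/2))^2 * frob3 (sym3 Q) ^ 2 := by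
  rw [← dotF_self, ← dotF_self]
  simp only [dotF, Fmat, sym3, Fin.sum_univ_three]
  ring

end Aux

/-- For `p ∈ (1,∞)` there exist `c, C > 0` depending only on `p` such that for all
`δ ≥ 0` and all 3×3 matrices `P, Q`:
`c·|F(P)−F(Q)|² ≤ (S(P)−S(Q))·(P−Q) ≤ C·|F(P)−F(Q)|²`,
`c·φ(|Q^sym|) ≤ S(Q)·Q ≤ C·φ(|Q^sym|)` and `c·φ(|Q^sym|) ≤ |F(Q)|² ≤ C·φ(|Q^sym|)`. -/
theorem hammer_equivalences (p : ℝ) (hp : 1 < p) :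
    ∃ c C : ℝ, 0 < c ∧ 0 < C ∧
      ∀ δ : ℝ, 0 ≤ δ → ∀ P Q : M3,
        (c * (frob3 (Fmat p δ P - Fmat p δ Q)) ^ 2
            ≤ dotF (Smat p δ P - Smat p δ Q) (P - Q) ∧
          dotF (Smat p δ P - Smat p δ Q) (P - Q)
            ≤ C * (frob3 (Fmat p δ P - Fmat p δ Q)) ^ 2) ∧
        (c * phiFun p δ (frob3 (sym3 Q)) ≤ dotF (Smat p δ Q) Q ∧
          dotF (Smat p δ Q) Q ≤ C * phiFun p δ (frob3 (sym3 Q))) ∧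
        (c * phiFun p δ (frob3 (sym3 Q)) ≤ (frob3 (Fmat p δ Q)) ^ 2 ∧
          (frob3 (Fmat p δ Q)) ^ 2 ≤ C * phiFun p δ (frob3 (sym3 Q))) := by

  obtain ⟨c1, C1, hc1, hC1, hcore⟩ := scalar_core p hp
  have hc00 : (0:ℝ) < min 1 ((2:ℝ)^(2-p)) / 4 := by
    have : (0:ℝ) < (2:ℝ)^(2-p) := Real.rpow_pos_of_pos (by norm_num) _
    have := lt_min one_pos this
    linarith
  set c0 : ℝ := min 1 ((2:ℝ)^(2-p)) / 4 with hc0def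
  refine ⟨min c1 1, max C1 (1/c0), lt_min hc1 one_pos,
    lt_of_lt_of_le hC1 (le_max_left _ _), ?_⟩
  intro δ hδ P Q
  have hfP : 0 ≤ frob3 (sym3 P) := frob3_nonneg _
  have hfQ : 0 ≤ frob3 (sym3 Q) := frob3_nonneg _
  have hAP : 0 ≤ δ + frob3 (sym3 P) := by linarith
  have hAQ : 0 ≤ δ + frob3 (sym3 Q) := by linarith
  refine ⟨?_, ?_, ?_⟩
  · -- part 1
    have e := expandU p δ P Q
    rw [sq_rpow_half _ _ hAP, sq_rpow_half _ _ hAQ] at e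
    have hUnn : 0 ≤ (δ + frob3 (sym3 P)) ^ (p-2) * frob3 (sym3 P) ^ 2
        + (δ + frob3 (sym3 Q)) ^ (p-2) * frob3 (sym3 Q) ^ 2
        - 2 * ((δ + frob3 (sym3 P)) ^ ((p-2)/2) * (δ + frob3 (sym3 Q)) ^ ((p-2)/2))
            * dotF (sym3 P) (sym3 Q) := e ▸ sq_nonneg _
    have hr := abs_dotF_le (sym3 P) (sym3 Q)
    rw [expandW p δ P Q, e]
    rcases le_total (frob3 (sym3 Q)) (frob3 (sym3 P)) with hba | hba
    · have h := hcore δ (frob3 (sym3 P)) (frob3 (sym3 Q)) (dotF (sym3 P) (sym3 Q))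
        hδ hfQ hba hr
      constructor
      · have h2 := mul_le_mul_of_nonneg_right (min_le_left c1 1) hUnn
        linarith [h.1]
      · have h2 := mul_le_mul_of_nonneg_right (le_max_left C1 (1/c0)) hUnn
        linarith [h.2]
    · have hr' : |dotF (sym3 P) (sym3 Q)| ≤ frob3 (sym3 Q) * frob3 (sym3 P) := by
        rw [mul_comm]; exact hr
      have h := hcore δ (frob3 (sym3 Q)) (frob3 (sym3 P)) (dotF (sym3 P) (sym3 Q))
        hδ hfP hba hr'
      constructor
      · have h2 := mul_le_mul_of_nonneg_right (min_le_left c1 1) hUnn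
        linarith [h.1]
      · have h2 := mul_le_mul_of_nonneg_right (le_max_left C1 (1/c0)) hUnn
        linarith [h.2]
  · -- part 2
    have hphi := phi_comp p hp δ (frob3 (sym3 Q)) hδ hfQ
    rw [← hc0def] at hphi
    have hX : 0 ≤ (δ + frob3 (sym3 Q)) ^ (p-2) * frob3 (sym3 Q) ^ 2 := by
      have := Real.rpow_nonneg hAQ (p-2); positivity
    have hφnn : 0 ≤ phiFun p δ (frob3 (sym3 Q)) := le_trans (by positivity) hphi.1
    rw [expandSQ p δ Q]
    constructor
    · have h2 := mul_le_mul_of_nonneg_right (min_le_right c1 1) hφnn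
      linarith [hphi.2]
    · have h5 := mul_le_mul_of_nonneg_left hphi.1 (le_of_lt (by positivity : (0:ℝ) < 1/c0))
      have h6 : (1/c0) * (c0 * ((δ + frob3 (sym3 Q)) ^ (p-2) * frob3 (sym3 Q) ^ 2))
          = (δ + frob3 (sym3 Q)) ^ (p-2) * frob3 (sym3 Q) ^ 2 := by
        field_simp
      have h7 := mul_le_mul_of_nonneg_right (le_max_right C1 (1/c0)) hφnn
      linarith
  · -- part 3
    have hphi := phi_comp p hp δ (frob3 (sym3 Q)) hδ hfQ
    rw [← hc0def] at hphi
    have hX : 0 ≤ (δ + frob3 (sym3 Q)) ^ (p-2) * frob3 (sym3 Q) ^ 2 := by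
      have := Real.rpow_nonneg hAQ (p-2); positivity
    have hφnn : 0 ≤ phiFun p δ (frob3 (sym3 Q)) := le_trans (by positivity) hphi.1
    rw [expandFQ p δ Q, sq_rpow_half _ _ hAQ]
    constructor
    · have h2 := mul_le_mul_of_nonneg_right (min_le_right c1 1) hφnn
      linarith [hphi.2]
    · have h5 := mul_le_mul_of_nonneg_left hphi.1 (le_of_lt (by positivity : (0:ℝ) < 1/c0))
      have h6 : (1/c0) * (c0 * ((δ + frob3 (sym3 Q)) ^ (p-2) * frob3 (sym3 Q) ^ 2))
          = (δ + frob3 (sym3 Q)) ^ (p-2) * frob3 (sym3 Q) ^ 2 := by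
        field_simp
      have h7 := mul_le_mul_of_nonneg_right (le_max_right C1 (1/c0)) hφnn
      linarith
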